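/- Let m ≥ 3, let A be a semi-symmetric strong M-tensor of order m and dimension n, let b ∈ ℝⁿ with b ≥ 0 and I₊ = {i : b_i > 0} nonempty, and let ε ∈ (0,1]. Then for every y > 0 with (A(y^{[1/(m−1)]})^{m−1})_i ≥ ε b_i for all i ∈ I₊, the principal submatrix f'(y)_{I₊I₊} of the Jacobian is a nonsingular M-matrix. -/

import Mathlib

open Finset Matrix Filter Topology

noncomputable section

/-- `(A x^{m-1})_i`: action of an `m`th-order `n`-dimensional tensor, stored with its first
index separated and `q = m-1` trailing indices:
`(A x^{m-1})_i = ∑_{i₂,…,i_m} a_{i i₂…i_m} x_{i₂}⋯x_{i_m}`. -/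
def tApp {n q : ℕ} (A : Fin n → (Fin q → Fin n) → ℝ) (x : Fin n → ℝ) (i : Fin n) : ℝ :=
  ∑ g : Fin q → Fin n, A i g * ∏ j, x (g j)

/-- Complex version of `tApp` (for eigenvalues). -/
def tAppC {n q : ℕ} (A : Fin n → (Fin q → Fin n) → ℝ) (x : Fin n → ℂ) (i : Fin n) : ℂ :=
  ∑ g : Fin q → Fin n, (A i g : ℂ) * ∏ j, x (g j)

/-- The identity tensor: entry `1` when all indices coincide, `0` otherwise. -/
def identT (n q : ℕ) : Fin n → (Fin q → Fin n) → ℝ :=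
  fun i g => if ∀ j, g j = i then 1 else 0

/-- `lam ∈ ℂ` is an eigenvalue of the tensor `B`: there is a nonzero `x ∈ ℂⁿ` with
`(B x^{m-1})_i = lam * x_i^{m-1}` for all `i`. -/
def IsTensorEigenvalue {n q : ℕ} (B : Fin n → (Fin q → Fin n) → ℝ) (lam : ℂ) : Prop :=
  ∃ x : Fin n → ℂ, x ≠ 0 ∧ ∀ i, tAppC B x i = lam * x i ^ q

/-- Semi-symmetry: the entries `a_{i i₂…i_m}` are invariant under permutations of `i₂,…,i_m`. -/
def IsSemiSymmetric {n q : ℕ} (A : Fin n → (Fin q → Fin n) → ℝ) : Prop :=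
  ∀ (i : Fin n) (g : Fin q → Fin n) (σ : Equiv.Perm (Fin q)), A i (g ∘ σ) = A i g

/-- Z-tensor: all off-diagonal entries are nonpositive. -/
def IsZTensor {n q : ℕ} (A : Fin n → (Fin q → Fin n) → ℝ) : Prop :=
  ∀ (i : Fin n) (g : Fin q → Fin n), ¬(∀ j, g j = i) → A i g ≤ 0

/-- Strong (nonsingular) M-tensor: `A = s·I − B` with `B ≥ 0` and `s > ρ(B)`,
i.e. `|λ| < s` for every eigenvalue `λ` of `B`. -/
def IsStrongMTensor {n q : ℕ} (A : Fin n → (Fin q → Fin n) → ℝ) : Prop :=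
  ∃ (s : ℝ) (B : Fin n → (Fin q → Fin n) → ℝ),
    (∀ i g, 0 ≤ B i g) ∧ (∀ i g, A i g = s * identT n q i g - B i g) ∧
    ∀ lam : ℂ, IsTensorEigenvalue B lam → ‖lam‖ < s

/-- Componentwise power `y^{[α]}`. -/
def cPow {n : ℕ} (y : Fin n → ℝ) (α : ℝ) : Fin n → ℝ := fun i => y i ^ α

/-- Euclidean norm on `Fin n → ℝ`. -/
def enorm2 {n : ℕ} (x : Fin n → ℝ) : ℝ := Real.sqrt (∑ i, x i ^ 2)

/-- The Jacobian matrix of a map `f : ℝⁿ → ℝⁿ` at `y`. -/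
def jacM {n : ℕ} (f : (Fin n → ℝ) → Fin n → ℝ) (y : Fin n → ℝ) :
    Matrix (Fin n) (Fin n) ℝ :=
  fun i j => fderiv ℝ (fun z => f z i) y (Pi.single j 1)

/-- `f(y) = A (y^{[1/(m-1)]})^{m-1} − b`, with `q = m−1`. -/
def fres {n q : ℕ} (A : Fin n → (Fin q → Fin n) → ℝ) (b : Fin n → ℝ)
    (y : Fin n → ℝ) : Fin n → ℝ :=
  fun i => tApp A (cPow y (1 / (q : ℝ))) i - b i

/-- Nonsingular M-matrix: nonpositive off-diagonal entries and `M = s·1 − N` with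
`N ≥ 0` entrywise and `s` larger than the spectral radius of `N`. -/
def IsNonsingularMMatrix {k : Type} [Fintype k] [DecidableEq k] (M : Matrix k k ℝ) : Prop :=
  (∀ i j, i ≠ j → M i j ≤ 0) ∧
  ∃ (s : ℝ) (N : Matrix k k ℝ), (∀ i j, 0 ≤ N i j) ∧
    M = s • (1 : Matrix k k ℝ) - N ∧
    ∀ μ ∈ spectrum ℂ (N.map (fun t : ℝ => (t : ℂ))), ‖μ‖ < s

/-- The feasible set `F_ε = {y > 0 : A (y^{[1/(m-1)]})^{m-1} ≥ ε b}`. -/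
def FSet {n q : ℕ} (A : Fin n → (Fin q → Fin n) → ℝ) (b : Fin n → ℝ) (ε : ℝ) :
    Set (Fin n → ℝ) :=
  {y | (∀ i, 0 < y i) ∧ ∀ i, ε * b i ≤ tApp A (cPow y (1 / (q : ℝ))) i}

/-- Acceptance of the trial steplength `t` in the line search: feasibility and
`‖f(y + t d)‖² ≤ (1 − 2σt)‖f(y)‖²`. -/
def StepOK {n q : ℕ} (A : Fin n → (Fin q → Fin n) → ℝ) (b : Fin n → ℝ)
    (Fb : Set (Fin n → ℝ)) (σ : ℝ) (y d : Fin n → ℝ) (t : ℝ) : Prop :=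
  y + t • d ∈ Fb ∧
    enorm2 (fres A b (y + t • d)) ^ 2 ≤ (1 - 2 * σ * t) * enorm2 (fres A b y) ^ 2

/-- Newton's method (Algorithm 2.4 resp. 3.4) with feasible set `Fb`, never terminating:
`y₀ ∈ Fb`; for every `k`, `f(y_k) ≠ 0`, `d_k` is the unique solution of
`f'(y_k) d = −f(y_k)`, `α_k = ρ^{i_k}` with `i_k` the least acceptable exponent, and
`y_{k+1} = y_k + α_k d_k`. -/
def NewtonIter {n q : ℕ} (A : Fin n → (Fin q → Fin n) → ℝ) (b : Fin n → ℝ)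
    (Fb : Set (Fin n → ℝ)) (σ ρ : ℝ) (y d : ℕ → Fin n → ℝ) (α : ℕ → ℝ) : Prop :=
  y 0 ∈ Fb ∧ ∀ k : ℕ,
    fres A b (y k) ≠ 0 ∧
    jacM (fres A b) (y k) *ᵥ d k = -fres A b (y k) ∧
    (∀ d', jacM (fres A b) (y k) *ᵥ d' = -fres A b (y k) → d' = d k) ∧
    (∃ ik : ℕ, α k = ρ ^ ik ∧ StepOK A b Fb σ (y k) (d k) (ρ ^ ik) ∧
      ∀ i < ik, ¬StepOK A b Fb σ (y k) (d k) (ρ ^ i)) ∧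
    y (k + 1) = y k + α k • d k

/-- Submatrix of `M` with rows indexed by `{i // P i}` and columns by `{i // Q i}`. -/
def subMat {n : ℕ} (M : Matrix (Fin n) (Fin n) ℝ) (P Q : Fin n → Prop) :
    Matrix {i // P i} {i // Q i} ℝ :=
  fun i j => M i.1 j.1

/-- `b` restricted to the index set `I₊ = {i : b_i > 0}`. -/
def bPlus {n : ℕ} (b : Fin n → ℝ) : {i : Fin n // 0 < b i} → ℝ := fun i => b i.1

/-- `F̄¹_ε = {y > 0 : (A(y^{[1/(m−1)]})^{m−1})_i ≥ ε b_i for all i ∈ I₊}`. -/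
def FBar1 {n q : ℕ} (A : Fin n → (Fin q → Fin n) → ℝ) (b : Fin n → ℝ) (ε : ℝ) :
    Set (Fin n → ℝ) :=
  {y | (∀ i, 0 < y i) ∧ ∀ i, 0 < b i → ε * b i ≤ tApp A (cPow y (1 / (q : ℝ))) i}

/-- `F̄²_{ε'} = {y > 0 : f'(y)_{I₊I₊} invertible and
`(A(y^{[1/(m−1)]})^{m−1})_{I₀} ≥ ε' f'(y)_{I₀I₊} f'(y)_{I₊I₊}⁻¹ b_{I₊}` componentwise}. -/
def FBar2 {n q : ℕ} (A : Fin n → (Fin q → Fin n) → ℝ) (b : Fin n → ℝ) (ε' : ℝ) :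
    Set (Fin n → ℝ) :=
  {y | (∀ i, 0 < y i) ∧
    IsUnit (subMat (jacM (fres A b) y) (fun i => 0 < b i) (fun i => 0 < b i)) ∧
    ∀ i : {i : Fin n // b i = 0},
      ε' * (subMat (jacM (fres A b) y) (fun i => b i = 0) (fun i => 0 < b i) *ᵥ
        ((subMat (jacM (fres A b) y) (fun i => 0 < b i) (fun i => 0 < b i))⁻¹ *ᵥ bPlus b)) i
        ≤ tApp A (cPow y (1 / (q : ℝ))) i.1}

/-- `F̄_{ε,ε'} = F̄¹_ε ∩ F̄²_{ε'}`. -/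
def FBar {n q : ℕ} (A : Fin n → (Fin q → Fin n) → ℝ) (b : Fin n → ℝ) (ε ε' : ℝ) :
    Set (Fin n → ℝ) :=
  FBar1 A b ε ∩ FBar2 A b ε'

/-- For every `i ∈ I₀` there exist indices `i₂,…,i_m ∈ I₊` with `a_{i i₂…i_m} ≠ 0`. -/
def I0Hyp {n q : ℕ} (A : Fin n → (Fin q → Fin n) → ℝ) (b : Fin n → ℝ) : Prop :=
  ∀ i : Fin n, b i = 0 → ∃ g : Fin q → Fin n, (∀ j, 0 < b (g j)) ∧ A i g ≠ 0


lemma jac_entry {n q : ℕ} (A : Fin n → (Fin q → Fin n) → ℝ) (b : Fin n → ℝ)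
    (y : Fin n → ℝ) (hy : ∀ i, 0 < y i) (i j : Fin n) :
    jacM (fres A b) y i j = ∑ g : Fin q → Fin n, A i g *
      ∑ k : Fin q, (if g k = j then
        (1 / (q : ℝ)) * y j ^ ((1 / (q : ℝ)) - 1) * ∏ l ∈ Finset.univ.erase k, y (g l) ^ (1 / (q : ℝ))
        else 0) := by
  set c : ℝ := 1 / (q : ℝ) with hc
  have hD : HasFDerivAt (fun z => fres A b z i)
      (∑ g : Fin q → Fin n, A i g • (∑ k : Fin q,
        (∏ l ∈ Finset.univ.erase k, y (g l) ^ c) •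
          ((c * y (g k) ^ (c - 1)) • (ContinuousLinearMap.proj (g k) :
            (Fin n → ℝ) →L[ℝ] ℝ)))) y := by
    have : HasFDerivAt (fun z : Fin n → ℝ => tApp A (cPow z c) i)
        (∑ g : Fin q → Fin n, A i g • (∑ k : Fin q,
          (∏ l ∈ Finset.univ.erase k, y (g l) ^ c) •
            ((c * y (g k) ^ (c - 1)) • (ContinuousLinearMap.proj (g k) :
              (Fin n → ℝ) →L[ℝ] ℝ)))) y := by
      unfold tApp cPow
      apply HasFDerivAt.fun_sum
      intro g _
      apply HasFDerivAt.const_mul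
      apply HasFDerivAt.finset_prod
      intro k _
      have h1 : HasFDerivAt (fun z : Fin n → ℝ => z (g k)) (ContinuousLinearMap.proj (g k) :
          (Fin n → ℝ) →L[ℝ] ℝ) y := hasFDerivAt_apply (g k) y
      exact (Real.hasDerivAt_rpow_const (Or.inl (hy (g k)).ne')).comp_hasFDerivAt y h1
    exact this.sub_const (b i)
  unfold jacM
  rw [hD.fderiv]
  simp only [ContinuousLinearMap.coe_sum', Finset.sum_apply, ContinuousLinearMap.coe_smul',
    Pi.smul_apply, ContinuousLinearMap.proj_apply, smul_eq_mul]
  refine Finset.sum_congr rfl fun g _ => ?_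
  congr 1
  refine Finset.sum_congr rfl fun k _ => ?_
  rw [Pi.single_apply]
  by_cases h : g k = j
  · simp [h]; ring
  · simp [h]
lemma jac_term_nonneg {n q : ℕ} (y : Fin n → ℝ) (hy : ∀ i, 0 < y i) (g : Fin q → Fin n)
    (j : Fin n) (k : Fin q) :
    0 ≤ (if g k = j then
        (1 / (q : ℝ)) * y j ^ ((1 / (q : ℝ)) - 1) * ∏ l ∈ Finset.univ.erase k, y (g l) ^ (1 / (q : ℝ))
        else 0) := by
  split
  · apply mul_nonneg (mul_nonneg (by positivity) (Real.rpow_nonneg (hy j).le _))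
    exact Finset.prod_nonneg fun l _ => Real.rpow_nonneg (hy (g l)).le _
  · exact le_refl 0

lemma jac_offdiag_nonpos {n q : ℕ} (A : Fin n → (Fin q → Fin n) → ℝ) (b : Fin n → ℝ)
    (hZ : IsZTensor A) (y : Fin n → ℝ) (hy : ∀ i, 0 < y i) (i j : Fin n) (hij : i ≠ j) :
    jacM (fres A b) y i j ≤ 0 := by
  rw [jac_entry A b y hy i j]
  apply Finset.sum_nonpos
  intro g _
  by_cases hg : ∀ k, g k = i
  · have h0 : ∀ k : Fin q, (if g k = j then
        (1 / (q : ℝ)) * y j ^ ((1 / (q : ℝ)) - 1) * ∏ l ∈ Finset.univ.erase k, y (g l) ^ (1 / (q : ℝ))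
        else 0) = 0 := by
      intro k
      rw [if_neg]
      rw [hg k]
      exact fun h => hij h
    rw [Finset.sum_congr rfl fun k _ => h0 k]
    simp
  · exact mul_nonpos_of_nonpos_of_nonneg (hZ i g hg)
      (Finset.sum_nonneg fun k _ => jac_term_nonneg y hy g j k)

lemma jac_row_sum {n q : ℕ} (hq : 1 ≤ q) (A : Fin n → (Fin q → Fin n) → ℝ) (b : Fin n → ℝ)
    (y : Fin n → ℝ) (hy : ∀ i, 0 < y i) (i : Fin n) :
    ∑ j, jacM (fres A b) y i j * y j = tApp A (cPow y (1 / (q : ℝ))) i := by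
  set c : ℝ := 1 / (q : ℝ) with hc
  have hcq : (q : ℝ) * c = 1 := by
    rw [hc]
    field_simp
  calc ∑ j, jacM (fres A b) y i j * y j
      = ∑ j, (∑ g : Fin q → Fin n, A i g *
          ∑ k : Fin q, (if g k = j then
            c * y j ^ (c - 1) * ∏ l ∈ Finset.univ.erase k, y (g l) ^ c else 0)) * y j := by
        refine Finset.sum_congr rfl fun j _ => ?_
        rw [jac_entry A b y hy i j]
    _ = ∑ g : Fin q → Fin n, A i g * ∏ l, y (g l) ^ c := by
        simp only [Finset.sum_mul]
        rw [Finset.sum_comm]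
        refine Finset.sum_congr rfl fun g _ => ?_
        have : ∀ j, (A i g * ∑ k : Fin q, (if g k = j then
            c * y j ^ (c - 1) * ∏ l ∈ Finset.univ.erase k, y (g l) ^ c else 0)) * y j
            = A i g * ∑ k : Fin q, (if g k = j then
            c * (y j ^ (c - 1) * y j) * ∏ l ∈ Finset.univ.erase k, y (g l) ^ c else 0) := by
          intro j
          rw [mul_assoc, Finset.sum_mul]
          congr 1
          refine Finset.sum_congr rfl fun k _ => ?_
          split <;> ring
        rw [Finset.sum_congr rfl fun j _ => this j, ← Finset.mul_sum]
        congr 1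
        rw [Finset.sum_comm]
        have hterm : ∀ k : Fin q, ∑ j, (if g k = j then
            c * (y j ^ (c - 1) * y j) * ∏ l ∈ Finset.univ.erase k, y (g l) ^ c else 0)
            = c * ∏ l, y (g l) ^ c := by
          intro k
          rw [Finset.sum_ite_eq (Finset.univ) (g k)
            (fun j => c * (y j ^ (c - 1) * y j) * ∏ l ∈ Finset.univ.erase k, y (g l) ^ c)]
          rw [if_pos (Finset.mem_univ _)]
          have : y (g k) ^ (c - 1) * y (g k) = y (g k) ^ c := by
            nth_rewrite 2 [← Real.rpow_one (y (g k))]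
            rw [← Real.rpow_add (hy (g k))]
            ring_nf
          rw [this, mul_assoc]
          congr 1
          exact Finset.mul_prod_erase Finset.univ (fun l => y (g l) ^ c) (Finset.mem_univ k)
        rw [Finset.sum_congr rfl fun k _ => hterm k, Finset.sum_const, Finset.card_univ,
          Fintype.card_fin, nsmul_eq_mul, ← mul_assoc, hcq, one_mul]
    _ = tApp A (cPow y c) i := rfl
lemma zmatrix_is_mmatrix {k : Type} [Fintype k] [DecidableEq k] [Nonempty k]
    (M : Matrix k k ℝ) (hZ : ∀ i j, i ≠ j → M i j ≤ 0)
    (u : k → ℝ) (hu : ∀ i, 0 < u i) (hMu : ∀ i, 0 < (M *ᵥ u) i) :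
    IsNonsingularMMatrix M := by
  set s : ℝ := 1 + ∑ i, |M i i| with hs
  set N : Matrix k k ℝ := s • (1 : Matrix k k ℝ) - M with hN
  have hNnn : ∀ i j, 0 ≤ N i j := by
    intro i j
    by_cases h : i = j
    · subst h
      simp only [hN, Matrix.sub_apply, Matrix.smul_apply, Matrix.one_apply_eq, smul_eq_mul, mul_one]
      have h1 : M i i ≤ ∑ l, |M l l| :=
        le_trans (le_abs_self _) (Finset.single_le_sum (fun l _ => abs_nonneg (M l l)) (Finset.mem_univ i))
      simp only [hs]; linarith
    · simp only [hN, Matrix.sub_apply, Matrix.smul_apply, Matrix.one_apply_ne h, smul_eq_mul,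
        mul_zero, zero_sub, neg_nonneg]
      exact hZ i j h
  refine ⟨hZ, s, N, hNnn, by rw [hN]; abel, ?_⟩
  intro μ hμ
  rw [spectrum.mem_iff] at hμ
  rw [Matrix.isUnit_iff_isUnit_det, isUnit_iff_ne_zero, not_not,
    ← Matrix.exists_mulVec_eq_zero_iff] at hμ
  obtain ⟨v, hv0, hv⟩ := hμ
  have hev : (N.map (fun t : ℝ => (t : ℂ))) *ᵥ v = μ • v := by
    have h0 : (algebraMap ℂ (Matrix k k ℂ) μ - N.map (fun t : ℝ => (t : ℂ))) *ᵥ v = 0 := hv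
    rw [Matrix.sub_mulVec] at h0
    have h2 : (algebraMap ℂ (Matrix k k ℂ) μ) *ᵥ v = μ • v := by
      ext i
      simp [Matrix.algebraMap_eq_diagonal, Matrix.mulVec_diagonal]
    rw [h2] at h0
    exact (sub_eq_zero.mp h0).symm
  obtain ⟨i₀, hi₀⟩ := Finite.exists_max (fun i => ‖v i‖ / u i)
  set r : ℝ := ‖v i₀‖ / u i₀ with hr
  have hvle : ∀ j, ‖v j‖ ≤ r * u j := by
    intro j
    have := hi₀ j
    rwa [div_le_iff₀ (hu j)] at this
  have hrpos : 0 < r := by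
    obtain ⟨j, hj⟩ := Function.ne_iff.mp hv0
    have : 0 < ‖v j‖ / u j := div_pos (by simpa using hj) (hu j)
    exact lt_of_lt_of_le this (hi₀ j)
  have hvv : ‖v i₀‖ = r * u i₀ := by
    rw [hr, div_mul_cancel₀ _ (hu i₀).ne']
  have hvi₀ : 0 < ‖v i₀‖ := by
    rw [hvv]; exact mul_pos hrpos (hu i₀)
  have key : ‖μ‖ * ‖v i₀‖ < s * ‖v i₀‖ := by
    have h1 : ‖μ‖ * ‖v i₀‖ = ‖(μ • v) i₀‖ := by
      simp
    rw [h1, ← hev]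
    calc ‖((N.map (fun t : ℝ => (t : ℂ))) *ᵥ v) i₀‖
        ≤ ∑ j, N i₀ j * ‖v j‖ := by
          rw [Matrix.mulVec]
          refine le_trans (norm_sum_le _ _) ?_
          refine Finset.sum_le_sum fun j _ => ?_
          simp only [Matrix.map_apply, norm_mul, Complex.norm_real, Real.norm_eq_abs,
            abs_of_nonneg (hNnn i₀ j)]
          exact le_refl _
      _ ≤ ∑ j, N i₀ j * (r * u j) :=
          Finset.sum_le_sum fun j _ => mul_le_mul_of_nonneg_left (hvle j) (hNnn i₀ j)
      _ = r * (N *ᵥ u) i₀ := by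
          simp only [Matrix.mulVec, dotProduct, Finset.mul_sum]
          exact Finset.sum_congr rfl fun j _ => by ring
      _ < r * (s * u i₀) := by
          apply mul_lt_mul_of_pos_left _ hrpos
          have hNu : (N *ᵥ u) i₀ = s * u i₀ - (M *ᵥ u) i₀ := by
            simp only [hN, Matrix.sub_mulVec, Matrix.smul_mulVec, Pi.sub_apply,
              Pi.smul_apply, Matrix.one_mulVec, smul_eq_mul]
          rw [hNu]
          linarith [hMu i₀]
      _ = s * ‖v i₀‖ := by rw [hvv]; ring
  exact lt_of_mul_lt_mul_right key (norm_nonneg _)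
theorem principal_submatrix_nonsingular_M {m n : ℕ} (hm : 3 ≤ m)
    (A : Fin n → (Fin (m - 1) → Fin n) → ℝ)
    (hsym : IsSemiSymmetric A) (hM : IsStrongMTensor A)
    (b : Fin n → ℝ) (hb : ∀ i, 0 ≤ b i) (hbp : ∃ i, 0 < b i)
    (ε : ℝ) (hε0 : 0 < ε) (hε1 : ε ≤ 1) :
    ∀ y ∈ FBar1 A b ε,
      IsNonsingularMMatrix
        (subMat (jacM (fres A b) y) (fun i => 0 < b i) (fun i => 0 < b i)) := by
  intro y hy
  obtain ⟨hypos, hfe⟩ := hy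
  obtain ⟨s0, B, hB, hAB, -⟩ := hM
  have hZ : IsZTensor A := by
    intro i g hg
    rw [hAB i g]
    unfold identT
    rw [if_neg hg]
    have := hB i g
    linarith
  have hq : 1 ≤ m - 1 := by omega
  haveI : Nonempty {i : Fin n // 0 < b i} := ⟨⟨hbp.choose, hbp.choose_spec⟩⟩
  apply zmatrix_is_mmatrix _ _ (fun j : {i : Fin n // 0 < b i} => y j.1)
    (fun j => hypos j.1)
  · intro i
    have hrow := jac_row_sum hq A b y hypos i.1
    have hpos : 0 < tApp A (cPow y (1 / ((m - 1 : ℕ) : ℝ))) i.1 :=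
      lt_of_lt_of_le (mul_pos hε0 i.2) (hfe i.1 i.2)
    have hneg : ∑ j ∈ Finset.univ.filter (fun j => ¬ 0 < b j),
        jacM (fres A b) y i.1 j * y j ≤ 0 := by
      apply Finset.sum_nonpos
      intro j hj
      rw [Finset.mem_filter] at hj
      have hij : i.1 ≠ j := fun h => hj.2 (h ▸ i.2)
      exact mul_nonpos_of_nonpos_of_nonneg
        (jac_offdiag_nonpos A b hZ y hypos i.1 j hij) (hypos j).le
    have hsum : ((subMat (jacM (fres A b) y) (fun i => 0 < b i) (fun i => 0 < b i)) *ᵥ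
        (fun j : {i : Fin n // 0 < b i} => y j.1)) i
        = ∑ j ∈ Finset.univ.filter (fun j => 0 < b j), jacM (fres A b) y i.1 j * y j := by
      simp only [Matrix.mulVec, dotProduct, subMat]
      exact (Finset.sum_subtype _ (by simp) (fun j => jacM (fres A b) y i.1 j * y j)).symm
    rw [hsum]
    have hsplit := Finset.sum_filter_add_sum_filter_not Finset.univ (fun j => 0 < b j)
      (fun j => jacM (fres A b) y i.1 j * y j)
    rw [hrow] at hsplit
    linarith
  · intro i j hij
    exact jac_offdiag_nonpos A b hZ y hypos i.1 j.1 (fun h => hij (Subtype.ext h))
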